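/- For 0 ≤ k ≤ (n-1)/2, the incomplete q-Chebyshev polynomials of the first kind satisfy the recurrence T_{n+2}^{k+1}(x,s,q) = (1+q^{n+1}) x T_{n+1}^{k+1}(x,s,q) + q^{n+1} s T_n^k(x,s,q). -/

import Mathlib

/-- q-integer [n]_q = (1-q^n)/(1-q). -/
noncomputable def qint (q : ℂ) (n : ℕ) : ℂ := (1 - q ^ n) / (1 - q)

/-- q-factorial [n]_q!. -/
noncomputable def qfact (q : ℂ) (n : ℕ) : ℂ := ∏ i ∈ Finset.range n, qint q (i + 1)

/-- Gaussian (q-binomial) coefficient, 0 for k > n. -/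
noncomputable def qbinom (q : ℂ) (n k : ℕ) : ℂ :=
  if k ≤ n then qfact q n / (qfact q (n - k) * qfact q k) else 0

/-- q-shifted factorial (x;q)_n. -/
noncomputable def qpoch (x q : ℂ) (n : ℕ) : ℂ := ∏ i ∈ Finset.range n, (1 - q ^ i * x)

/-- Partial sum defining incomplete q-Chebyshev polynomials of the second kind:
`Usum x s q n (k+1)` is U_n^k(x,s,q), and `Usum x s q n 0 = 0` is the empty sum (k = -1). -/
noncomputable def Usum (x s q : ℂ) (n m : ℕ) : ℂ :=
  ∑ j ∈ Finset.range m,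
    q ^ (j ^ 2) * qbinom q (n - j) j * (qpoch (-q) q (n - j) / qpoch (-q) q j) *
      s ^ j * x ^ (n - 2 * j)

/-- Partial sum defining incomplete q-Chebyshev polynomials of the first kind:
`Tsum x s q n (k+1)` is T_n^k(x,s,q). -/
noncomputable def Tsum (x s q : ℂ) (n m : ℕ) : ℂ :=
  ∑ j ∈ Finset.range m,
    q ^ (j ^ 2) * (qint q n / qint q (n - j)) * qbinom q (n - j) j *
      (qpoch (-q) q (n - j - 1) / qpoch (-q) q j) * s ^ j * x ^ (n - 2 * j)


lemma one_sub_qpow_ne {q : ℂ} (hq1 : ‖q‖ < 1) {m : ℕ} (hm : m ≠ 0) :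
    (1 : ℂ) - q ^ m ≠ 0 := by
  intro h
  have h1 : q ^ m = 1 := by linear_combination -h
  have h2 : ‖q ^ m‖ < 1 := by
    rw [norm_pow]; exact pow_lt_one₀ (norm_nonneg q) hq1 hm
  rw [h1] at h2; simp at h2

lemma one_add_qpow_ne {q : ℂ} (hq1 : ‖q‖ < 1) {m : ℕ} (hm : m ≠ 0) :
    (1 : ℂ) + q ^ m ≠ 0 := by
  intro h
  have h1 : q ^ m = -1 := by linear_combination h
  have h2 : ‖q ^ m‖ < 1 := by
    rw [norm_pow]; exact pow_lt_one₀ (norm_nonneg q) hq1 hm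
  rw [h1] at h2; simp at h2

lemma qint_ne {q : ℂ} (hq1 : ‖q‖ < 1) {m : ℕ} (hm : m ≠ 0) : qint q m ≠ 0 :=
  div_ne_zero (one_sub_qpow_ne hq1 hm) (by simpa using one_sub_qpow_ne hq1 one_ne_zero)

lemma qfact_ne {q : ℂ} (hq1 : ‖q‖ < 1) (m : ℕ) : qfact q m ≠ 0 :=
  Finset.prod_ne_zero_iff.mpr fun i _ => qint_ne hq1 (Nat.succ_ne_zero i)

lemma qpoch_ne {q : ℂ} (hq1 : ‖q‖ < 1) (m : ℕ) : qpoch (-q) q m ≠ 0 :=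
  Finset.prod_ne_zero_iff.mpr fun i _ => by
    have h := one_add_qpow_ne hq1 (Nat.succ_ne_zero i)
    intro h0; apply h; rw [← h0, pow_succ]; ring

lemma qfact_succ (q : ℂ) (m : ℕ) : qfact q (m + 1) = qfact q m * qint q (m + 1) :=
  Finset.prod_range_succ _ _

lemma qpoch_succ (q : ℂ) (m : ℕ) :
    qpoch (-q) q (m + 1) = qpoch (-q) q m * (1 + q ^ (m + 1)) := by
  rw [qpoch, Finset.prod_range_succ, ← qpoch]; ring

set_option maxHeartbeats 2000000 in
lemma key {q : ℂ} (hq1 : ‖q‖ < 1) (x s : ℂ) (j t : ℕ) :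
    q ^ ((j+1) ^ 2) * (qint q (2*j+3+t) / qint q (j+2+t)) * qbinom q (j+2+t) (j+1) *
      (qpoch (-q) q (j+1+t) / qpoch (-q) q (j+1)) * s ^ (j+1) * x ^ (t+1) =
    (1 + q ^ (2*j+2+t)) * x *
      (q ^ ((j+1) ^ 2) * (qint q (2*j+2+t) / qint q (j+1+t)) * qbinom q (j+1+t) (j+1) *
      (qpoch (-q) q (j+t) / qpoch (-q) q (j+1)) * s ^ (j+1) * x ^ t) +
    q ^ (2*j+2+t) * s *
      (q ^ (j ^ 2) * (qint q (2*j+1+t) / qint q (j+1+t)) * qbinom q (j+1+t) j *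
      (qpoch (-q) q (j+t) / qpoch (-q) q j) * s ^ j * x ^ (t+1)) := by
  have e1 : qbinom q (j+2+t) (j+1) = qfact q (j+2+t) / (qfact q (t+1) * qfact q (j+1)) := by
    rw [qbinom, if_pos (by omega), show j+2+t - (j+1) = t+1 from by omega]
  have e2 : qbinom q (j+1+t) (j+1) = qfact q (j+1+t) / (qfact q t * qfact q (j+1)) := by
    rw [qbinom, if_pos (by omega), show j+1+t - (j+1) = t from by omega]
  have e3 : qbinom q (j+1+t) j = qfact q (j+1+t) / (qfact q (t+1) * qfact q j) := by
    rw [qbinom, if_pos (by omega), show j+1+t - j = t+1 from by omega]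
  have e4 : qfact q (j+2+t) = qfact q (j+1+t) * qint q (j+2+t) := by
    rw [show j+2+t = (j+1+t)+1 from by omega, qfact_succ]
  have e5 : qfact q (t+1) = qfact q t * qint q (t+1) := qfact_succ q t
  have e6 : qfact q (j+1) = qfact q j * qint q (j+1) := qfact_succ q j
  have e7 : qpoch (-q) q (j+1+t) = qpoch (-q) q (j+t) * (1 + q ^ (j+1+t)) := by
    rw [show j+1+t = (j+t)+1 from by omega, qpoch_succ, show j+t+1 = j+1+t from by omega]
  have e8 : qpoch (-q) q (j+1) = qpoch (-q) q j * (1 + q ^ (j+1)) := qpoch_succ q j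
  rw [e1, e2, e3, e4, e5, e6, e7, e8]
  have p1 : q ^ ((j+1)^2) = q ^ (j^2) * (q^j)^2 * q := by
    rw [show (j+1)^2 = j^2 + (j*2+1) from by ring, pow_add, pow_add, pow_mul]; ring
  have p2 : q ^ (2*j+3+t) = (q^j)^2 * q^t * q^3 := by
    rw [show 2*j+3+t = j*2 + t + 3 from by ring, pow_add, pow_add, pow_mul]
  have p3 : q ^ (j+2+t) = q^j * q^t * q^2 := by
    rw [show j+2+t = j + t + 2 from by ring, pow_add, pow_add]
  have p4 : q ^ (2*j+2+t) = (q^j)^2 * q^t * q^2 := by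
    rw [show 2*j+2+t = j*2 + t + 2 from by ring, pow_add, pow_add, pow_mul]
  have p5 : q ^ (j+1+t) = q^j * q^t * q := by
    rw [show j+1+t = j + t + 1 from by ring, pow_add, pow_add, pow_one]
  have p6 : q ^ (2*j+1+t) = (q^j)^2 * q^t * q := by
    rw [show 2*j+1+t = j*2 + t + 1 from by ring, pow_add, pow_add, pow_mul, pow_one]
  have p7 : q ^ (t+1) = q^t * q := by rw [pow_add, pow_one]
  have p8 : q ^ (j+1) = q^j * q := by rw [pow_add, pow_one]
  have p9 : s ^ (j+1) = s^j * s := by rw [pow_add, pow_one]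
  have p10 : x ^ (t+1) = x^t * x := by rw [pow_add, pow_one]
  rw [qint, qint, qint, qint, qint, qint, qint]
  rw [p1, p2, p3, p4, p5, p6, p7, p8, p9, p10]
  set a := q^j with ha
  set b := q^t with hb
  set c := q^(j^2) with hc
  set Fj := qfact q j
  set Ft := qfact q t
  set F := qfact q (j+1+t)
  set Pj := qpoch (-q) q j
  set P := qpoch (-q) q (j+t)
  have h1q : (1:ℂ) - q ≠ 0 := by simpa using one_sub_qpow_ne hq1 one_ne_zero
  have n1 : (1:ℂ) - q ^ (j+2+t) ≠ 0 := one_sub_qpow_ne hq1 (by omega)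
  have n2 : (1:ℂ) - q ^ (j+1+t) ≠ 0 := one_sub_qpow_ne hq1 (by omega)
  have n3 : (1:ℂ) - q ^ (t+1) ≠ 0 := one_sub_qpow_ne hq1 (by omega)
  have n4 : (1:ℂ) - q ^ (j+1) ≠ 0 := one_sub_qpow_ne hq1 (by omega)
  have n5 : (1:ℂ) + q ^ (j+1) ≠ 0 := one_add_qpow_ne hq1 (by omega)
  have n6 : (1:ℂ) + q ^ (j+1+t) ≠ 0 := one_add_qpow_ne hq1 (by omega)
  have nf1 : qfact q t ≠ 0 := qfact_ne hq1 t
  have nf2 : qfact q j ≠ 0 := qfact_ne hq1 j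
  have np1 : qpoch (-q) q j ≠ 0 := qpoch_ne hq1 j
  rw [p3] at n1
  rw [p5] at n2 n6
  rw [p7] at n3
  rw [p8] at n4 n5
  field_simp
  have d1 : (1 - a*b*q^2) * ((1-q) * (Ft*(1-b*q)*(Fj*(1-a*q)))) * (Pj*(1+a*q)) ≠ 0 := by
    exact mul_ne_zero (mul_ne_zero n1 (mul_ne_zero h1q (mul_ne_zero (mul_ne_zero nf1 n3)
      (mul_ne_zero nf2 n4)))) (mul_ne_zero np1 n5)
  have d2 : (1 - a*b*q) * (Ft*(Fj*(1-a*q))) * (Pj*(1+a*q)) ≠ 0 := by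
    exact mul_ne_zero (mul_ne_zero n2 (mul_ne_zero nf1 (mul_ne_zero nf2 n4)))
      (mul_ne_zero np1 n5)
  have d3 : (1 - a*b*q) * (Ft*(1-b*q)*Fj) * Pj ≠ 0 := by
    exact mul_ne_zero (mul_ne_zero n2 (mul_ne_zero (mul_ne_zero nf1 n3) nf2)) np1
  have n3' : (1:ℂ) - q*b ≠ 0 := by rwa [mul_comm] at n3
  have n2' : (1:ℂ) - a*q*b ≠ 0 := by rwa [mul_right_comm] at n2
  have n1' : (1:ℂ) - a*q^2*b ≠ 0 := by rwa [mul_right_comm] at n1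
  field_simp
  ring


theorem Tinc_rec (q : ℂ) (hq0 : 0 < ‖q‖) (hq1 : ‖q‖ < 1)
    (x s : ℂ) (n k : ℕ) (hk : 2 * k + 1 ≤ n) :
    Tsum x s q (n + 2) (k + 2) =
      (1 + q ^ (n + 1)) * x * Tsum x s q (n + 1) (k + 2) +
        q ^ (n + 1) * s * Tsum x s q n (k + 1) := by
  simp only [Tsum]
  rw [Finset.sum_range_succ' _ (k+1), Finset.sum_range_succ' _ (k+1)]
  have h0 : ∀ m : ℕ, m ≠ 0 →
      q ^ (0 ^ 2) * (qint q m / qint q (m - 0)) * qbinom q (m - 0) 0 *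
        (qpoch (-q) q (m - 0 - 1) / qpoch (-q) q 0) * s ^ 0 * x ^ (m - 2 * 0) =
      qpoch (-q) q (m - 1) * x ^ m := by
    intro m hm
    have hq : qint q m ≠ 0 := qint_ne hq1 hm
    have hf : qfact q m ≠ 0 := qfact_ne hq1 m
    have hb0 : qfact q 0 = 1 := Finset.prod_range_zero _
    have hp0 : qpoch (-q) q 0 = 1 := Finset.prod_range_zero _
    simp only [qbinom, Nat.sub_zero]
    rw [if_pos (Nat.zero_le m)]
    simp only [Nat.sub_zero, Nat.mul_zero, pow_zero, hb0, hp0, mul_one, div_one,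
      div_self hq, div_self hf, one_mul, pow_zero]
    norm_num
  have hterm : ∀ i ∈ Finset.range (k+1),
      q ^ ((i+1) ^ 2) * (qint q (n+2) / qint q (n+2 - (i+1))) * qbinom q (n+2 - (i+1)) (i+1) *
        (qpoch (-q) q (n+2 - (i+1) - 1) / qpoch (-q) q (i+1)) * s ^ (i+1) * x ^ (n+2 - 2*(i+1)) =
      (1 + q ^ (n+1)) * x *
        (q ^ ((i+1) ^ 2) * (qint q (n+1) / qint q (n+1 - (i+1))) * qbinom q (n+1 - (i+1)) (i+1) *
        (qpoch (-q) q (n+1 - (i+1) - 1) / qpoch (-q) q (i+1)) * s ^ (i+1) * x ^ (n+1 - 2*(i+1))) +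
      q ^ (n+1) * s *
        (q ^ (i ^ 2) * (qint q n / qint q (n - i)) * qbinom q (n - i) i *
        (qpoch (-q) q (n - i - 1) / qpoch (-q) q i) * s ^ i * x ^ (n - 2*i)) := by
    intro i hi
    have hik : i ≤ k := by simpa [Nat.lt_succ_iff] using hi
    obtain ⟨t, hn⟩ : ∃ t, n = 2*i+1+t := ⟨n - (2*i+1), by omega⟩
    rw [hn]
    simp only [show 2*i+3+t - (i+1) = i+2+t from by omega,
      show 2*i+1+t+2 - (i+1) = i+2+t from by omega,
      show 2*i+1+t+2 = 2*i+3+t from by omega,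
      show 2*i+1+t+1 = 2*i+2+t from by omega,
      show i+2+t - 1 = i+1+t from by omega,
      show 2*i+3+t - 2*(i+1) = t+1 from by omega,
      show 2*i+2+t - (i+1) = i+1+t from by omega,
      show i+1+t - 1 = i+t from by omega,
      show 2*i+2+t - 2*(i+1) = t from by omega,
      show 2*i+1+t - i = i+1+t from by omega,
      show 2*i+1+t - 2*i = t+1 from by omega]
    exact key hq1 x s i t
  rw [Finset.sum_congr rfl hterm, Finset.sum_add_distrib, ← Finset.mul_sum, ← Finset.mul_sum,
    h0 (n+2) (by omega), h0 (n+1) (by omega)]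
  have hp : qpoch (-q) q (n+2-1) = qpoch (-q) q (n+1-1) * (1 + q ^ (n+1)) := by
    simpa using qpoch_succ q n
  rw [hp]
  ring
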